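/- arXiv:2302.13480 — 3 statements merged into one kernel-verified Lean document; each statement's English description precedes it below -/
import Mathlib

section
/- Let K be an algebraically closed field of characteristic p containing F_q. Let P = ∑_{γ=0}^{r} a_γ τ^γ + ∑_{β=1}^{n} ∑_{γ=0}^{κ_β} b_{βγ} τ^γ T^β ∈ K[T]{τ} with a_0 ≠ 0 and a_r ≠ 0, and all κ_β < r. Then for every x_0 ∈ K with ∑_γ a_γ x_0^{q^γ} = 0, and for every i ≥ 1, the equation determining x_i from x_0,…,x_{i−1} (namely ∑_γ a_γ x_i^{q^γ} + (terms in earlier x's) = 0) has exactly q^r solutions x_i in K; hence the set of solutions X = ∑ x_i T^i to P·X = 0 is a free F_q[[T]]-module of rank r. -/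
open Finset
set_option linter.unusedSectionVars false
set_option linter.unusedVariables false
set_option synthInstance.maxHeartbeats 1000000
set_option maxHeartbeats 1000000

/-- The coefficientwise `q`-power Frobenius on `K[[T]]`. -/
noncomputable def sigma {K : Type*} [CommSemiring K] (q : ℕ) (X : PowerSeries K) :
    PowerSeries K :=
  PowerSeries.mk fun i => (PowerSeries.coeff i X) ^ q

/-- Action on `K[[T]]` of the element
`P = ∑_{γ=0}^{r} a_γ τ^γ + ∑_{β=1}^{nn} ∑_{γ=0}^{r-1} b_{βγ} τ^γ T^β`
of the Anderson ring `K[T]{τ}`. -/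
noncomputable def actP {K : Type*} [CommSemiring K] (q r nn : ℕ)
    (a : ℕ → K) (b : ℕ → ℕ → K) (X : PowerSeries K) : PowerSeries K :=
  (∑ γ ∈ Finset.range (r + 1), PowerSeries.C (a γ) * (sigma q)^[γ] X) +
  ∑ β ∈ Finset.Icc 1 nn, ∑ γ ∈ Finset.range r,
    PowerSeries.C (b β γ) * PowerSeries.X ^ β * (sigma q)^[γ] X

/-- mul coefficients as a range sum -/
theorem coeff_mul_range {K : Type*} [Field K] (U V : PowerSeries K) (m : ℕ) :
    PowerSeries.coeff m (U * V) =
      ∑ k ∈ Finset.range (m + 1), PowerSeries.coeff k U * PowerSeries.coeff (m - k) V := by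
  rw [PowerSeries.coeff_mul, Finset.Nat.sum_antidiagonal_eq_sum_range_succ_mk]

noncomputable def alph {K : Type*} [Field K] (r : ℕ) (cExp : K → Fin r → K)
    (xc : ℕ → K) (bc : Fin r → ℕ → K) : ℕ → Fin r → K
  | m => cExp (xc m - ∑ i ∈ (Finset.range m).attach,
      ∑ j, alph r cExp xc bc i.1 j * bc j (m - i.1))
  termination_by m => m
  decreasing_by all_goals exact Finset.mem_range.mp i.2

theorem alph_eq {K : Type*} [Field K] (r : ℕ) (cExp : K → Fin r → K)
    (xc : ℕ → K) (bc : Fin r → ℕ → K) (m : ℕ) :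
    alph r cExp xc bc m = cExp (xc m - ∑ i ∈ Finset.range m,
      ∑ j, alph r cExp xc bc i j * bc j (m - i)) := by
  rw [alph]
  rw [← Finset.sum_attach (Finset.range m)
    (fun i => ∑ j, alph r cExp xc bc i j * bc j (m - i))]

section Basic

variable {K : Type*} [Field K] {q : ℕ}

theorem coeff_sigma (X : PowerSeries K) (i : ℕ) :
    PowerSeries.coeff i (sigma q X) = (PowerSeries.coeff i X) ^ q :=
  PowerSeries.coeff_mk _ _

theorem coeff_sigma_iter (γ : ℕ) (X : PowerSeries K) (i : ℕ) :
    PowerSeries.coeff i ((sigma q)^[γ] X) = (PowerSeries.coeff i X) ^ q ^ γ := by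
  induction γ generalizing X with
  | zero => simp
  | succ γ ih =>
    rw [Function.iterate_succ_apply, ih, coeff_sigma, ← pow_mul, pow_succ, mul_comm q]

variable {p : ℕ} [Fact p.Prime] [CharP K p] {n : ℕ} (hn : 0 < n) (hq : q = p ^ n)
include hn hq

theorem sigma_mul (A B : PowerSeries K) : sigma q (A * B) = sigma q A * sigma q B := by
  ext i
  simp only [coeff_sigma, PowerSeries.coeff_mul, hq, sum_pow_char_pow]
  exact Finset.sum_congr rfl fun x _ => mul_pow _ _ _

theorem sigma_sub (A B : PowerSeries K) : sigma q (A - B) = sigma q A - sigma q B := by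
  ext i
  simp only [coeff_sigma, map_sub, hq, sub_pow_char_pow]

theorem sigma_zero : sigma q (0 : PowerSeries K) = 0 := by
  have hq0 : q ≠ 0 := hq ▸ (pow_pos (Fact.out : p.Prime).pos n).ne'
  ext i; simp [coeff_sigma, zero_pow hq0]

theorem sigma_iter_sub (γ : ℕ) (A B : PowerSeries K) :
    (sigma q)^[γ] (A - B) = (sigma q)^[γ] A - (sigma q)^[γ] B := by
  induction γ generalizing A B with
  | zero => simp
  | succ γ ih =>
    rw [Function.iterate_succ_apply', Function.iterate_succ_apply',
      Function.iterate_succ_apply', ih, sigma_sub hn hq]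

theorem sigma_iter_mul (γ : ℕ) (A B : PowerSeries K) :
    (sigma q)^[γ] (A * B) = (sigma q)^[γ] A * (sigma q)^[γ] B := by
  induction γ generalizing A B with
  | zero => simp
  | succ γ ih =>
    rw [Function.iterate_succ_apply', Function.iterate_succ_apply',
      Function.iterate_succ_apply', ih, sigma_mul hn hq]

theorem sigma_iter_zero (γ : ℕ) : (sigma q)^[γ] (0 : PowerSeries K) = 0 := by
  induction γ with
  | zero => simp
  | succ γ ih => rw [Function.iterate_succ_apply', ih, sigma_zero hn hq]

theorem sigma_iter_fixed (γ : ℕ) {A : PowerSeries K} (hA : sigma q A = A) :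
    (sigma q)^[γ] A = A := Function.iterate_fixed hA γ

variable (r nn : ℕ) (a : ℕ → K) (b : ℕ → ℕ → K)

theorem actP_sub (A B : PowerSeries K) :
    actP q r nn a b (A - B) = actP q r nn a b A - actP q r nn a b B := by
  simp only [actP, sigma_iter_sub hn hq, mul_sub, Finset.sum_sub_distrib]
  ring

theorem actP_zero : actP q r nn a b 0 = 0 := by
  simp [actP, sigma_iter_zero hn hq]

theorem actP_fixed_mul {A : PowerSeries K} (hA : sigma q A = A) (Y : PowerSeries K) :
    actP q r nn a b (A * Y) = A * actP q r nn a b Y := by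
  simp only [actP, sigma_iter_mul hn hq, sigma_iter_fixed hn hq _ hA, mul_add,
    Finset.mul_sum]
  congr 1
  · exact Finset.sum_congr rfl fun γ _ => by ring
  · exact Finset.sum_congr rfl fun β _ => Finset.sum_congr rfl fun γ _ => by ring

theorem actP_sum {ι : Type*} (s : Finset ι) (f : ι → PowerSeries K) :
    actP q r nn a b (∑ j ∈ s, f j) = ∑ j ∈ s, actP q r nn a b (f j) := by
  classical
  induction s using Finset.cons_induction with
  | empty => simpa using actP_zero hn hq r nn a b
  | cons j s hj ih =>
    rw [Finset.sum_cons, Finset.sum_cons, ← ih]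
    have := actP_sub hn hq r nn a b (f j + ∑ x ∈ s, f x) (-f j)
    simp only [sub_neg_eq_add] at this
    -- use sub to get add
    have hadd : ∀ A B : PowerSeries K,
        actP q r nn a b (A + B) = actP q r nn a b A + actP q r nn a b B := by
      intro A B
      have h1 := actP_sub hn hq r nn a b A (-B)
      have h2 := actP_sub hn hq r nn a b 0 B
      rw [zero_sub, actP_zero hn hq, zero_sub] at h2
      rw [sub_neg_eq_add] at h1
      rw [h1, h2]; ring
    exact hadd _ _

end Basic

section CoeffActP

variable {K : Type*} [Field K] {q : ℕ}

/-- constant tail depending on lower coefficients -/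
noncomputable def tailC (q r nn : ℕ) {K : Type*} [Field K] (b : ℕ → ℕ → K)
    (x : ℕ → K) (m : ℕ) : K :=
  ∑ β ∈ Finset.Icc 1 nn, ∑ γ ∈ Finset.range r,
    b β γ * (if β ≤ m then x (m - β) else 0) ^ q ^ γ

theorem coeff_actP (hq0 : q ≠ 0) (r nn : ℕ) (a : ℕ → K) (b : ℕ → ℕ → K)
    (X : PowerSeries K) (m : ℕ) :
    PowerSeries.coeff m (actP q r nn a b X) =
      (∑ γ ∈ Finset.range (r + 1), a γ * (PowerSeries.coeff m X) ^ q ^ γ) +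
      tailC q r nn b (fun i => PowerSeries.coeff i X) m := by
  rw [actP, map_add, map_sum, map_sum, tailC]
  congr 1
  · exact Finset.sum_congr rfl fun γ _ => by
      rw [PowerSeries.coeff_C_mul, coeff_sigma_iter]
  · refine Finset.sum_congr rfl fun β hβ => ?_
    rw [map_sum]
    refine Finset.sum_congr rfl fun γ _ => ?_
    have : PowerSeries.C (b β γ) * PowerSeries.X ^ β * (sigma q)^[γ] X =
        (PowerSeries.C (b β γ) * (sigma q)^[γ] X) * PowerSeries.X ^ β := by ring
    rw [this, PowerSeries.coeff_mul_X_pow', PowerSeries.coeff_C_mul, coeff_sigma_iter]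
    split_ifs with h
    · rfl
    · rw [zero_pow (pow_ne_zero _ hq0), mul_zero]

theorem tailC_zero (hq0 : q ≠ 0) (r nn : ℕ) (b : ℕ → ℕ → K) (x : ℕ → K) :
    tailC q r nn (K := K) b x 0 = 0 := by
  rw [tailC]
  refine Finset.sum_eq_zero fun β hβ => Finset.sum_eq_zero fun γ _ => ?_
  rw [if_neg (by have := (Finset.mem_Icc.mp hβ).1; omega),
    zero_pow (pow_ne_zero _ hq0), mul_zero]

/-- tailC only depends on strictly smaller values -/
theorem tailC_congr (r nn : ℕ) (b : ℕ → ℕ → K) (x y : ℕ → K) (m : ℕ)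
    (h : ∀ i < m, x i = y i) : tailC q r nn b x m = tailC q r nn b y m := by
  refine Finset.sum_congr rfl fun β hβ => Finset.sum_congr rfl fun γ _ => ?_
  have hβ1 := (Finset.mem_Icc.mp hβ).1
  by_cases hc : β ≤ m
  · rw [if_pos hc, if_pos hc, h _ (by omega)]
  · rw [if_neg hc, if_neg hc]

end CoeffActP

section ExtSeq

variable {K : Type*} [Field K]

noncomputable def extSeq (q r nn : ℕ) (a : ℕ → K) (b : ℕ → ℕ → K)
    (hex : ∀ c : K, ∃ y : K, ∑ γ ∈ Finset.range (r + 1), a γ * y ^ q ^ γ + c = 0)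
    (x0 : K) : ℕ → K
  | 0 => x0
  | (m + 1) => Classical.choose (hex (∑ β ∈ Finset.Icc 1 nn, ∑ γ ∈ Finset.range r,
      b β γ * (if h : 1 ≤ β ∧ β ≤ m + 1 then extSeq q r nn a b hex x0 (m + 1 - β) else 0)
        ^ q ^ γ))
  termination_by m => m
  decreasing_by all_goals omega

theorem extSeq_spec (q r nn : ℕ) (a : ℕ → K) (b : ℕ → ℕ → K)
    (hex : ∀ c : K, ∃ y : K, ∑ γ ∈ Finset.range (r + 1), a γ * y ^ q ^ γ + c = 0)
    (x0 : K) (m : ℕ) (hm : 1 ≤ m) :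
    ∑ γ ∈ Finset.range (r + 1), a γ * (extSeq q r nn a b hex x0 m) ^ q ^ γ +
      tailC q r nn b (extSeq q r nn a b hex x0) m = 0 := by
  obtain ⟨m, rfl⟩ : ∃ m', m = m' + 1 := ⟨m - 1, by omega⟩
  have key := Classical.choose_spec (hex (∑ β ∈ Finset.Icc 1 nn, ∑ γ ∈ Finset.range r,
      b β γ * (if h : 1 ≤ β ∧ β ≤ m + 1 then extSeq q r nn a b hex x0 (m + 1 - β) else 0)
        ^ q ^ γ))
  rw [extSeq]
  convert key using 3
  rw [tailC]
  refine Finset.sum_congr rfl fun β hβ => Finset.sum_congr rfl fun γ _ => ?_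
  have hβ1 := (Finset.mem_Icc.mp hβ).1
  by_cases hc : β ≤ m + 1
  · rw [if_pos hc, dif_pos ⟨hβ1, hc⟩]
  · rw [if_neg hc, dif_neg (by omega)]

end ExtSeq

section PolyPart
open Polynomial
variable {p n q : ℕ} [Fact p.Prime] {K : Type*} [Field K] [CharP K p] [IsAlgClosed K]

/-- The head polynomial plus a constant. -/
noncomputable def gpoly (q r : ℕ) (a : ℕ → K) (c : K) : K[X] :=
  (∑ γ ∈ range (r + 1), C (a γ) * X ^ q ^ γ) + C c

theorem card_sol (hn : 0 < n) (hq : q = p ^ n) (r : ℕ) (a : ℕ → K)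
    (ha0 : a 0 ≠ 0) (har : a r ≠ 0) (c : K) :
    Nat.card {y : K | ∑ γ ∈ range (r + 1), a γ * y ^ q ^ γ + c = 0} = q ^ r := by
  have hq2 : 2 ≤ q := hq ▸ (Fact.out : p.Prime).two_le.trans (Nat.le_self_pow hn.ne' p)
  have hqK : (q : K) = 0 := by
    rw [hq]; push_cast [CharP.cast_eq_zero K p]; simp [zero_pow hn.ne']
  set g : K[X] := gpoly q r a c with hg
  have hderiv : derivative g = C (a 0) := by
    rw [hg, gpoly, derivative_add, derivative_C, add_zero, derivative_sum]
    rw [Finset.sum_eq_single 0]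
    · simp
    · intro γ _ hγ
      have : (q : K) ^ γ = 0 := by
        rw [hqK]; exact zero_pow hγ
      simp [derivative_C_mul, derivative_X_pow, this]
    · simp
  have hcoeff : g.coeff (q ^ r) = a r := by
    rw [hg, gpoly, coeff_add, coeff_C, if_neg (pow_ne_zero r (by omega : q ≠ 0)), add_zero,
      finset_sum_coeff]
    rw [Finset.sum_eq_single r]
    · simp
    · intro γ hγ hγr
      have : q ^ γ ≠ q ^ r := fun h => hγr (Nat.pow_right_injective hq2 h)
      simp [coeff_C_mul, coeff_X_pow, this.symm]
    · simp
  have hgne : g ≠ 0 := fun h => har (by simpa [h] using hcoeff.symm)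
  have hdegle : g.natDegree ≤ q ^ r := by
    apply natDegree_add_le_of_degree_le _ (natDegree_C c ▸ Nat.zero_le _)
    apply natDegree_sum_le_of_forall_le
    intro γ hγ
    exact (natDegree_C_mul_le _ _).trans <| (natDegree_X_pow _).le.trans <|
      Nat.pow_le_pow_right (by omega) (Nat.lt_succ_iff.mp (mem_range.mp hγ))
  have hdeg : g.natDegree = q ^ r :=
    le_antisymm hdegle (le_natDegree_of_ne_zero (hcoeff ▸ har))
  have hsep : g.Separable := by
    refine ⟨0, C (a 0)⁻¹, ?_⟩
    rw [hderiv, zero_mul, zero_add, ← C_mul, inv_mul_cancel₀ ha0, C_1]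
  have hsplit : (g.map (algebraMap K K)).Splits := IsAlgClosed.splits _
  have heval : ∀ y : K, (Polynomial.aeval y) g = ∑ γ ∈ range (r + 1), a γ * y ^ q ^ γ + c :=
    fun y => by simp [hg, gpoly, eval_finset_sum]
  have hset : {y : K | ∑ γ ∈ range (r + 1), a γ * y ^ q ^ γ + c = 0} = g.rootSet K := by
    ext y
    simp [mem_rootSet, hgne, heval]
  rw [hset, Nat.card_eq_fintype_card, card_rootSet_eq_natDegree hsep hsplit, hdeg]

theorem card_fixed (hn : 0 < n) (hq : q = p ^ n) :
    Nat.card {y : K | y ^ q = y} = q := by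
  have hq2 : 2 ≤ q := hq ▸ (Fact.out : p.Prime).two_le.trans (Nat.le_self_pow hn.ne' p)
  have hqK : (q : K) = 0 := by
    rw [hq]; push_cast [CharP.cast_eq_zero K p]; simp [zero_pow hn.ne']
  set g : K[X] := X ^ q - X with hg
  have hgmap : g = X ^ q - X := rfl
  have hderiv : derivative g = -1 := by
    rw [hg, derivative_sub, derivative_X_pow, derivative_X, hqK]
    simp
  have hgne : g ≠ 0 := by
    intro h
    have := congrArg (fun t => coeff t 1) h
    simp only [hg, coeff_sub, coeff_X_pow, coeff_X_one, coeff_zero] at this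
    rw [if_neg (by omega : ¬(1 = q))] at this
    simp at this
  have hdeg : g.natDegree = q := by
    rw [hg]
    rw [natDegree_sub_eq_left_of_natDegree_lt] <;> simp [natDegree_X_pow] <;> omega
  have hsep : g.Separable := by
    refine ⟨0, -1, ?_⟩
    rw [hderiv]; ring
  have hsplit : (g.map (algebraMap K K)).Splits := IsAlgClosed.splits _
  have hset : {y : K | y ^ q = y} = g.rootSet K := by
    ext y
    simp [mem_rootSet, hgne, hg, sub_eq_zero]
    exact fun _ h => hgne (by rw [hg, h, sub_self])
  rw [hset, Nat.card_eq_fintype_card, card_rootSet_eq_natDegree hsep hsplit, hdeg]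

theorem pow_q_pow_fixed {x : K} (hx : x ^ q = x) (γ : ℕ) : x ^ q ^ γ = x := by
  induction γ with
  | zero => simp
  | succ γ ih => rw [pow_succ, pow_mul, ih, hx]

theorem card_headker (hn : 0 < n) (hq : q = p ^ n) (r : ℕ) (a : ℕ → K)
    (ha0 : a 0 ≠ 0) (har : a r ≠ 0) :
    Nat.card {y : K | ∑ γ ∈ range (r + 1), a γ * y ^ q ^ γ = 0} = q ^ r := by
  have := card_sol hn hq r a ha0 har 0
  simpa using this

theorem basis_W (hn : 0 < n) (hq : q = p ^ n) (r : ℕ) (hr : 1 ≤ r) (a : ℕ → K)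
    (ha0 : a 0 ≠ 0) (har : a r ≠ 0) :
    ∃ w : Fin r → K,
      (∀ j, ∑ γ ∈ range (r + 1), a γ * (w j) ^ q ^ γ = 0) ∧
      (∀ z : K, ∑ γ ∈ range (r + 1), a γ * z ^ q ^ γ = 0 →
        ∃ c : Fin r → K, (∀ j, (c j) ^ q = c j) ∧ z = ∑ j, c j * w j) ∧
      (∀ c : Fin r → K, (∀ j, (c j) ^ q = c j) → ∑ j, c j * w j = 0 → ∀ j, c j = 0) := by
  classical
  have hq2 : 2 ≤ q := hq ▸ (Fact.out : p.Prime).two_le.trans (Nat.le_self_pow hn.ne' p)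
  let F : Subfield K := (iterateFrobenius K p n).eqLocusField (RingHom.id K)
  have hmemF : ∀ x : K, x ∈ F ↔ x ^ q = x := fun x => by
    simp only [F, RingHom.eqLocusField, iterateFrobenius_def, hq]
    exact Iff.rfl
  have hcardF : Nat.card F = q := by
    rw [← card_fixed hn hq (K := K)]
    exact Nat.card_congr (Equiv.subtypeEquivRight (fun x => (hmemF x)))
  have hFfin : Finite F := (Nat.card_ne_zero.mp (by omega)).2
  have hchar : ∀ u v : K, ∀ γ : ℕ, (u + v) ^ q ^ γ = u ^ q ^ γ + v ^ q ^ γ := by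
    intro u v γ
    rw [hq, ← pow_mul]
    exact add_pow_char_pow ..
  let W : Submodule F K :=
    { carrier := {y : K | ∑ γ ∈ range (r + 1), a γ * y ^ q ^ γ = 0}
      add_mem' := by
        intro u v hu hv
        simp only [Set.mem_setOf_eq] at *
        simp only [hchar, mul_add, Finset.sum_add_distrib, hu, hv, add_zero]
      zero_mem' := by
        simp [zero_pow (pow_ne_zero _ (by omega : q ≠ 0))]
      smul_mem' := by
        intro c y hy
        simp only [Set.mem_setOf_eq] at *
        have hc : (c : K) ^ q = c := (hmemF c).mp c.2
        have hsmul : c • y = (c : K) * y := rfl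
        rw [hsmul]
        have hcy : ∀ γ : ℕ, ((c : K) * y) ^ q ^ γ = (c : K) * y ^ q ^ γ := fun γ => by
          rw [mul_pow, pow_q_pow_fixed hc]
        simp only [hcy]
        calc ∑ γ ∈ range (r + 1), a γ * ((c:K) * y ^ q ^ γ)
            = (c:K) * ∑ γ ∈ range (r + 1), a γ * y ^ q ^ γ := by
              rw [Finset.mul_sum]; exact Finset.sum_congr rfl fun γ _ => by ring
          _ = 0 := by rw [hy, mul_zero] }
  have hmemW : ∀ y : K, y ∈ W ↔ ∑ γ ∈ range (r + 1), a γ * y ^ q ^ γ = 0 :=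
    fun y => Iff.rfl
  have hcardW : Nat.card W = q ^ r := by
    rw [← card_headker hn hq r a ha0 har]
    exact Nat.card_congr (Equiv.subtypeEquivRight (fun x => (hmemW x)))
  have hWfin : Finite W := (Nat.card_ne_zero.mp (by rw [hcardW]; positivity)).2
  letI : Module.Finite F W := Module.Finite.of_finite
  letI : Module.Free F W := Module.Free.of_divisionRing F W
  have hrank : Module.finrank F W = r := by
    letI := Fintype.ofFinite (↥F)
    letI := Fintype.ofFinite (↥W)
    have hc := Module.card_eq_pow_finrank (K := F) (V := W)
    rw [← Nat.card_eq_fintype_card, ← Nat.card_eq_fintype_card, hcardW, hcardF] at hc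
    exact (Nat.pow_right_injective hq2 hc.symm)
  let bW : Module.Basis (Fin r) F W := Module.finBasisOfFinrankEq F W hrank
  refine ⟨fun j => (bW j : K), fun j => (bW j).2, ?_, ?_⟩
  · intro z hz
    have hzW : z ∈ W := hz
    have hs := bW.sum_repr ⟨z, hzW⟩
    refine ⟨fun j => (bW.repr ⟨z, hzW⟩ j : K),
      fun j => (hmemF _).mp (bW.repr ⟨z, hzW⟩ j).2, ?_⟩
    have h2 : z = ((∑ i : Fin r, (bW.repr ⟨z, hzW⟩) i • bW i : W) : K) := by rw [hs]
    have h3 : ((∑ i : Fin r, (bW.repr ⟨z, hzW⟩) i • bW i : W) : K)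
        = ∑ i : Fin r, ((bW.repr ⟨z, hzW⟩ i : K) * (bW i : K)) := by
      rw [AddSubmonoidClass.coe_finset_sum]
      exact Finset.sum_congr rfl fun i _ => rfl
    refine h2.trans (h3.trans ?_)
    simp
  · intro c hc hsum j
    set d : Fin r → F := fun j => ⟨c j, (hmemF _).mpr (hc j)⟩ with hd
    have h4 : ((∑ j, d j • bW j : W) : K) = ∑ j, c j * (bW j : K) := by
      rw [AddSubmonoidClass.coe_finset_sum]
      exact Finset.sum_congr rfl fun i _ => rfl
    have hzero : ∑ j, d j • bW j = 0 := by
      apply Subtype.ext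
      rw [h4]
      exact hsum
    have h0 := Fintype.linearIndependent_iff.mp bW.linearIndependent d hzero j
    have : c j = (d j : K) := rfl
    rw [this, h0]
    rfl

end PolyPart

section Extra

variable {K : Type*} [Field K] {q : ℕ}

theorem extSeq_zero (q r nn : ℕ) (a : ℕ → K) (b : ℕ → ℕ → K)
    (hex : ∀ c : K, ∃ y : K, ∑ γ ∈ Finset.range (r + 1), a γ * y ^ q ^ γ + c = 0)
    (x0 : K) : extSeq q r nn a b hex x0 0 = x0 := by
  rw [extSeq]

theorem tailC_zerofun (hq0 : q ≠ 0) (r nn : ℕ) (b : ℕ → ℕ → K) (m : ℕ) :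
    tailC q r nn (K := K) b (fun _ => 0) m = 0 := by
  rw [tailC]
  refine Finset.sum_eq_zero fun β hβ => Finset.sum_eq_zero fun γ _ => ?_
  split_ifs <;> rw [zero_pow (pow_ne_zero _ hq0), mul_zero]

end Extra

/-- For `P` as above with `a 0 ≠ 0`, `a r ≠ 0` and all tail degrees `< r` over an
algebraically closed `K`: for every `x₀` solving the head equation and every
`i ≥ 1`, the equation determining `x_i` from `x_0, …, x_{i-1}` has exactly `q^r`
solutions; and the set of solutions `X` to `P·X = 0` is a free
`𝔽_q[[T]]`-module of rank `r` (scalars `𝔽_q[[T]]` = σ-fixed power series). -/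
theorem stmt6 {p n q : ℕ} [Fact p.Prime] (hn : 0 < n) (hq : q = p ^ n)
    {K : Type*} [Field K] [CharP K p] [IsAlgClosed K]
    (r nn : ℕ) (hr : 1 ≤ r) (a : ℕ → K) (b : ℕ → ℕ → K)
    (ha0 : a 0 ≠ 0) (har : a r ≠ 0) :
    (∀ x : ℕ → K, ∑ γ ∈ Finset.range (r + 1), a γ * (x 0) ^ q ^ γ = 0 →
      ∀ i, 1 ≤ i →
        Nat.card {y : K |
          ∑ γ ∈ Finset.range (r + 1), a γ * y ^ q ^ γ +
          ∑ β ∈ Finset.Icc 1 nn, ∑ γ ∈ Finset.range r,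
            b β γ * (if β ≤ i then x (i - β) else 0) ^ q ^ γ = 0} = q ^ r) ∧
    (∃ B : Fin r → PowerSeries K,
      (∀ j, actP q r nn a b (B j) = 0) ∧
      ∀ X : PowerSeries K, actP q r nn a b X = 0 →
        ∃! A : Fin r → PowerSeries K,
          (∀ j, sigma q (A j) = A j) ∧ X = ∑ j, A j * B j) := by
  classical
  have hq2 : 2 ≤ q := hq ▸ (Fact.out : p.Prime).two_le.trans (Nat.le_self_pow hn.ne' p)
  have hq0 : q ≠ 0 := by omega
  constructor
  · intro x hx i hi
    exact card_sol hn hq r a ha0 har _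
  · obtain ⟨w, hw0, hWexp, hWind⟩ := basis_W hn hq r hr a ha0 har
    have hex : ∀ c : K, ∃ y : K, ∑ γ ∈ Finset.range (r + 1), a γ * y ^ q ^ γ + c = 0 := by
      intro c
      have hcard := card_sol hn hq r a ha0 har c
      have hne : Nat.card {y : K |
          ∑ γ ∈ Finset.range (r + 1), a γ * y ^ q ^ γ + c = 0} ≠ 0 := by
        rw [hcard]; exact pow_ne_zero _ hq0
      obtain ⟨⟨y, hy⟩⟩ := (Nat.card_ne_zero.mp hne).1
      exact ⟨y, hy⟩
    set es : K → ℕ → K := extSeq q r nn a b hex with hes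
    set bc : Fin r → ℕ → K := fun j => es (w j) with hbcdef
    set B : Fin r → PowerSeries K := fun j => PowerSeries.mk (bc j) with hBdef
    have hcoeffB : ∀ j i, PowerSeries.coeff i (B j) = bc j i := fun j i =>
      PowerSeries.coeff_mk _ _
    have hbc0 : ∀ j, bc j 0 = w j := fun j => extSeq_zero q r nn a b hex (w j)
    have hBsol : ∀ j, actP q r nn a b (B j) = 0 := by
      intro j
      ext m
      rw [coeff_actP hq0, map_zero]
      have hfunB : (fun i => PowerSeries.coeff i (B j)) = bc j := by
        funext i; exact hcoeffB j i
      rw [hfunB, hcoeffB]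
      rcases Nat.eq_zero_or_pos m with hm | hm
      · subst hm
        rw [tailC_zero hq0, hbc0, add_zero]
        exact hw0 j
      · exact extSeq_spec q r nn a b hex (w j) m hm
    refine ⟨B, hBsol, ?_⟩
    intro X hX
    set xc : ℕ → K := fun i => PowerSeries.coeff i X with hxcdef
    have hxc : ∀ i, PowerSeries.coeff i X = xc i := fun i => rfl
    set cExp : K → Fin r → K := fun z =>
      if h : ∑ γ ∈ Finset.range (r + 1), a γ * z ^ q ^ γ = 0 then
        Classical.choose (hWexp z h) else 0 with hcExpdef
    set α : ℕ → Fin r → K := alph r cExp xc bc with hαdef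
    have key : ∀ m, (∀ j, (α m j) ^ q = α m j) ∧
        xc m = ∑ i ∈ Finset.range (m + 1), ∑ j, α i j * bc j (m - i) := by
      intro m
      induction m using Nat.strong_induction_on with
      | _ m IH =>
      set Atr : Fin r → PowerSeries K :=
        fun j => PowerSeries.mk (fun i => if i < m then α i j else 0) with hAtrdef
      have hAtrfix : ∀ j, sigma q (Atr j) = Atr j := by
        intro j
        ext i
        rw [coeff_sigma, hAtrdef]
        simp only [PowerSeries.coeff_mk]
        split_ifs with h
        · exact (IH i h).1 j
        · exact zero_pow hq0
      set Y : PowerSeries K := X - ∑ j, Atr j * B j with hYdef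
      have hYsol : actP q r nn a b Y = 0 := by
        rw [hYdef, actP_sub hn hq, hX, actP_sum hn hq, zero_sub, neg_eq_zero]
        refine Finset.sum_eq_zero fun j _ => ?_
        rw [actP_fixed_mul hn hq _ _ _ _ (hAtrfix j), hBsol j, mul_zero]
      have hcoeffS : ∀ i, PowerSeries.coeff i (∑ j, Atr j * B j)
          = ∑ k ∈ Finset.range (i + 1), ∑ j,
              (if k < m then α k j else 0) * bc j (i - k) := by
        intro i
        rw [map_sum]
        calc ∑ j, PowerSeries.coeff i (Atr j * B j)
            = ∑ j, ∑ k ∈ Finset.range (i + 1),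
                (if k < m then α k j else 0) * bc j (i - k) := by
              refine Finset.sum_congr rfl fun j _ => ?_
              rw [coeff_mul_range]
              refine Finset.sum_congr rfl fun k _ => ?_
              rw [hAtrdef]
              simp only [PowerSeries.coeff_mk]
              rw [hcoeffB]
          _ = _ := Finset.sum_comm
      have hYlow : ∀ i, i < m → PowerSeries.coeff i Y = 0 := by
        intro i him
        rw [hYdef, map_sub, hcoeffS]
        have h1 : ∑ k ∈ Finset.range (i + 1), ∑ j,
            (if k < m then α k j else 0) * bc j (i - k)
            = ∑ k ∈ Finset.range (i + 1), ∑ j, α k j * bc j (i - k) := by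
          refine Finset.sum_congr rfl fun k hk => Finset.sum_congr rfl fun j _ => ?_
          rw [if_pos (lt_of_le_of_lt (Nat.lt_succ_iff.mp (Finset.mem_range.mp hk)) him)]
        rw [h1, hxc i, ← (IH i him).2, sub_self]
      have hzW : ∑ γ ∈ Finset.range (r + 1),
          a γ * (PowerSeries.coeff m Y) ^ q ^ γ = 0 := by
        have h0 := congrArg (PowerSeries.coeff m) hYsol
        rw [coeff_actP hq0, map_zero] at h0
        have htail : tailC q r nn b (fun i => PowerSeries.coeff i Y) m = 0 := by
          rw [tailC_congr r nn b _ (fun _ => 0) m (fun i hi => hYlow i hi)]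
          exact tailC_zerofun hq0 r nn b m
        rw [htail, add_zero] at h0
        exact h0
      have hzval : PowerSeries.coeff m Y
          = xc m - ∑ i ∈ Finset.range m, ∑ j, α i j * bc j (m - i) := by
        rw [hYdef, map_sub, hcoeffS, hxc m]
        congr 1
        rw [Finset.sum_range_succ]
        have h1 : ∑ j, (if m < m then α m j else 0) * bc j (m - m) = 0 := by simp
        rw [h1, add_zero]
        exact Finset.sum_congr rfl fun k hk =>
          Finset.sum_congr rfl fun j _ => by rw [if_pos (Finset.mem_range.mp hk)]
      have hαm : α m = cExp (PowerSeries.coeff m Y) := by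
        rw [hzval]
        exact alph_eq r cExp xc bc m
      have hchoose := Classical.choose_spec (hWexp _ hzW)
      have hcExpz : cExp (PowerSeries.coeff m Y) = Classical.choose (hWexp _ hzW) := by
        rw [hcExpdef]
        exact dif_pos hzW
      constructor
      · intro j
        rw [hαm, hcExpz]
        exact hchoose.1 j
      · rw [Finset.sum_range_succ]
        have hlast : ∑ j, α m j * bc j (m - m) = PowerSeries.coeff m Y := by
          rw [Nat.sub_self]
          calc ∑ j, α m j * bc j 0 = ∑ j, α m j * w j := by
                refine Finset.sum_congr rfl fun j _ => by rw [hbc0]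
            _ = PowerSeries.coeff m Y := by rw [hαm, hcExpz]; exact hchoose.2.symm
        rw [hlast, hzval]
        ring
    set A : Fin r → PowerSeries K := fun j => PowerSeries.mk (fun m => α m j) with hAdef
    have hAfix : ∀ j, sigma q (A j) = A j := by
      intro j
      ext i
      rw [coeff_sigma, hAdef]
      simp only [PowerSeries.coeff_mk]
      exact (key i).1 j
    have hXsum : X = ∑ j, A j * B j := by
      ext m
      rw [map_sum]
      have h1 : ∑ j, PowerSeries.coeff m (A j * B j)
          = ∑ k ∈ Finset.range (m + 1), ∑ j, α k j * bc j (m - k) := by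
        calc ∑ j, PowerSeries.coeff m (A j * B j)
            = ∑ j, ∑ k ∈ Finset.range (m + 1), α k j * bc j (m - k) := by
              refine Finset.sum_congr rfl fun j _ => ?_
              rw [coeff_mul_range]
              refine Finset.sum_congr rfl fun k _ => ?_
              rw [hAdef]
              simp only [PowerSeries.coeff_mk]
              rw [hcoeffB]
          _ = _ := Finset.sum_comm
      rw [h1, ← (key m).2, hxc m]
    refine ⟨A, ⟨hAfix, hXsum⟩, ?_⟩
    rintro A' ⟨hA'fix, hA'sum⟩
    set D : Fin r → PowerSeries K := fun j => A' j - A j with hDdef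
    have hDfix : ∀ j, sigma q (D j) = D j := by
      intro j
      rw [hDdef]
      show sigma q (A' j - A j) = A' j - A j
      rw [sigma_sub hn hq, hA'fix, hAfix]
    have hDsum : ∑ j, D j * B j = 0 := by
      have : ∀ j ∈ Finset.univ (α := Fin r), D j * B j = A' j * B j - A j * B j :=
        fun j _ => by rw [hDdef]; show (A' j - A j) * B j = _; ring
      rw [Finset.sum_congr rfl this, Finset.sum_sub_distrib, ← hA'sum, ← hXsum, sub_self]
    have hDzero : ∀ m j, PowerSeries.coeff m (D j) = 0 := by
      intro m
      induction m using Nat.strong_induction_on with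
      | _ m IH =>
      have h0 := congrArg (PowerSeries.coeff m) hDsum
      rw [map_zero, map_sum] at h0
      have hexp : ∑ j, PowerSeries.coeff m (D j * B j)
          = ∑ j, PowerSeries.coeff m (D j) * w j := by
        refine Finset.sum_congr rfl fun j _ => ?_
        rw [coeff_mul_range, Finset.sum_range_succ]
        have hlow : ∑ k ∈ Finset.range m,
            PowerSeries.coeff k (D j) * PowerSeries.coeff (m - k) (B j) = 0 :=
          Finset.sum_eq_zero fun k hk => by
            rw [IH k (Finset.mem_range.mp hk) j, zero_mul]
        rw [hlow, zero_add, Nat.sub_self, hcoeffB, hbc0]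
      rw [hexp] at h0
      have hc : ∀ j, (PowerSeries.coeff m (D j)) ^ q = PowerSeries.coeff m (D j) := by
        intro j
        have := congrArg (PowerSeries.coeff m) (hDfix j)
        rw [coeff_sigma] at this
        exact this
      exact fun j => hWind _ hc h0 j
    funext j
    ext m
    have h1 := hDzero m j
    rw [hDdef] at h1
    have h2 : PowerSeries.coeff m (A' j - A j) = 0 := h1
    rw [map_sub, sub_eq_zero] at h2
    exact h2
end

section
/- Let K be a field of characteristic p containing F_q and let 𝔓 = (P_{ij}) be an n×n matrix over K[T]{τ} with each P_{ij} of degree at most k in τ. Then there exist C_1,…,C_n ∈ K[T]{τ}, not all zero, each of degree at most k(n−1) in τ, such that ∑_{i=1}^n C_i P_{ij} = 0 for all j = 2,…,n. -/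
/-- The `q^i`-power Frobenius twist of a polynomial in `K[T]`, applied
coefficientwise. -/
noncomputable def twist {K : Type*} [CommSemiring K] (q i : ℕ) (c : Polynomial K) :
    Polynomial K :=
  c.sum fun k a => Polynomial.C (a ^ q ^ i) * Polynomial.X ^ k

/-- Multiplication in the Anderson ring `K[T]{τ}`: elements `∑_γ c_γ(T) τ^γ` are
represented as polynomials in the outer variable `τ` with coefficients in
`K[T]`, and `τ^i · c(T) = c^{(i)}(T) · τ^i` where `c^{(i)}` raises each
coefficient to the power `q^i`. -/
noncomputable def tmulA {K : Type*} [CommSemiring K] (q : ℕ)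
    (f g : Polynomial (Polynomial K)) : Polynomial (Polynomial K) :=
  ∑ i ∈ f.support, ∑ j ∈ g.support,
    Polynomial.C (f.coeff i * twist q i (g.coeff j)) * Polynomial.X ^ (i + j)


lemma twist_zero {K : Type*} [CommSemiring K] (q i : ℕ) : twist q i (0 : Polynomial K) = 0 := by
  simp [twist]

lemma coeff_tmulA {K : Type*} [CommSemiring K] (q : ℕ) (f g : Polynomial (Polynomial K))
    (m N : ℕ) (hf : f.natDegree < N) :
    (tmulA q f g).coeff m
      = ∑ a ∈ Finset.range N,
          f.coeff a * (if a ≤ m then twist q a (g.coeff (m - a)) else 0) := by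
  unfold tmulA
  simp only [Polynomial.finset_sum_coeff, Polynomial.coeff_C_mul, Polynomial.coeff_X_pow,
    mul_ite, mul_one, mul_zero, Polynomial.coeff_C]
  have hinner : ∀ i, (∑ j ∈ g.support,
      if m = i + j then f.coeff i * twist q i (g.coeff j) else 0)
      = (if i ≤ m then f.coeff i * twist q i (g.coeff (m - i)) else 0) := by
    intro i
    by_cases him : i ≤ m
    · rw [if_pos him]
      have hiff : ∀ j, (m = i + j) = (j = m - i) := by
        intro j; apply propext; omega
      simp_rw [hiff]
      rw [Finset.sum_ite_eq' g.support (m - i) (fun j => f.coeff i * twist q i (g.coeff j))]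
      by_cases hm : m - i ∈ g.support
      · simp [hm]
      · rw [if_neg hm, Polynomial.notMem_support_iff.mp hm, twist_zero, mul_zero]
    · rw [if_neg him, Finset.sum_eq_zero]
      intro j _
      rw [if_neg (by omega)]
  calc (∑ i ∈ f.support, ∑ j ∈ g.support,
        if m = i + j then f.coeff i * twist q i (g.coeff j) else 0)
      = ∑ i ∈ f.support, (if i ≤ m then f.coeff i * twist q i (g.coeff (m - i)) else 0) :=
        Finset.sum_congr rfl fun i _ => hinner i
    _ = ∑ a ∈ Finset.range N, (if a ≤ m then f.coeff a * twist q a (g.coeff (m - a)) else 0) := by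
        apply Finset.sum_subset (Polynomial.supp_subset_range hf)
        intro a _ ha
        rw [Polynomial.notMem_support_iff.mp ha]
        simp
    _ = _ := by
        apply Finset.sum_congr rfl
        intro a _
        split <;> simp

lemma coeff_mk {R : Type*} [CommSemiring R] (u : ℕ) (c : Fin u → R) (a : Fin u) :
    (∑ b : Fin u, Polynomial.C (c b) * Polynomial.X ^ (b : ℕ)).coeff (a : ℕ) = c a := by
  rw [Polynomial.finset_sum_coeff]
  rw [Finset.sum_eq_single a]
  · simp
  · intro b _ hb
    simp only [Polynomial.coeff_C_mul, Polynomial.coeff_X_pow]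
    rw [if_neg (by simpa [Fin.val_eq_val] using (Ne.symm hb)), mul_zero]
  · simp

lemma card_subtype_fin (nn : ℕ) :
    Fintype.card {j : Fin nn // 1 ≤ (j : ℕ)} = nn - 1 := by
  have e : {j : Fin nn // 1 ≤ (j : ℕ)} ≃ Fin (nn - 1) :=
    { toFun := fun j => ⟨(j : Fin nn).1 - 1, by have := (j : Fin nn).2; have := j.2; omega⟩
      invFun := fun a => ⟨⟨a.1 + 1, by have := a.2; omega⟩, by simp⟩
      left_inv := fun j => by
        ext
        have := j.2; simp; omega
      right_inv := fun a => by ext; simp }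
  rw [Fintype.card_congr e, Fintype.card_fin]

/-- Existence of cofactors: for an `nn × nn` matrix `𝔓 = (P_{ij})` over
`K[T]{τ}` with all entries of `τ`-degree at most `k`, there are
`C_1, …, C_nn ∈ K[T]{τ}`, not all zero, each of `τ`-degree at most `k(nn−1)`,
with `∑_i C_i P_{ij} = 0` for all columns `j ≥ 2` (indexed here by `j ≠ 0`). -/
theorem stmt8 {p n q : ℕ} [Fact p.Prime] (hn : 0 < n) (hq : q = p ^ n)
    {K : Type*} [Field K] [CharP K p]
    (nn k : ℕ) (hnn : 1 ≤ nn)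
    (P : Fin nn → Fin nn → Polynomial (Polynomial K))
    (hP : ∀ i j, (P i j).natDegree ≤ k) :
    ∃ C : Fin nn → Polynomial (Polynomial K),
      (∃ i, C i ≠ 0) ∧
      (∀ i, (C i).natDegree ≤ k * (nn - 1)) ∧
      ∀ j : Fin nn, 1 ≤ (j : ℕ) → ∑ i, tmulA q (C i) (P i j) = 0 := by
  classical
  set R := Polynomial K with hR
  set F := FractionRing R with hF
  set u := k * (nn - 1) + 1 with hu
  have hk1 : k * nn = k * (nn - 1) + k := by
    obtain ⟨m0, rfl⟩ : ∃ m0, nn = m0 + 1 := ⟨nn - 1, by omega⟩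
    simp [Nat.mul_succ]
  set M : Matrix ({j : Fin nn // 1 ≤ (j : ℕ)} × Fin (k * nn + 1)) (Fin nn × Fin u) F :=
    fun w v => algebraMap R F (if (v.2 : ℕ) ≤ (w.2 : ℕ)
      then twist q (v.2 : ℕ) ((P v.1 w.1.1).coeff ((w.2 : ℕ) - (v.2 : ℕ))) else 0) with hM
  -- a nonzero kernel vector over the fraction field
  obtain ⟨x, hx0, hxker⟩ : ∃ x : Fin nn × Fin u → F, x ≠ 0 ∧ M.mulVecLin x = 0 := by
    by_contra h
    push_neg at h
    have hker : ∀ x : Fin nn × Fin u → F, M.mulVecLin x = 0 → x = 0 := by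
      intro x hx
      by_contra hx0
      exact (h x hx0) hx
    have hinj : Function.Injective M.mulVecLin :=
      LinearMap.ker_eq_bot.mp (LinearMap.ker_eq_bot'.mpr hker)
    have hle := LinearMap.finrank_le_finrank_of_injective hinj
    rw [Module.finrank_pi F, Module.finrank_pi F, Fintype.card_prod, Fintype.card_prod,
      card_subtype_fin, Fintype.card_fin, Fintype.card_fin, Fintype.card_fin] at hle
    obtain ⟨m0, rfl⟩ : ∃ m0, nn = m0 + 1 := ⟨nn - 1, by omega⟩
    rw [hu] at hle
    simp only [Nat.add_sub_cancel] at hle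
    have : m0 * (k * (m0 + 1) + 1) + 1 = (m0 + 1) * (k * m0 + 1) := by ring
    omega
  -- clear denominators
  obtain ⟨b, hb⟩ := IsLocalization.exist_integer_multiples (nonZeroDivisors R) Finset.univ x
  have hb' : ∀ v : Fin nn × Fin u, ∃ r : R, algebraMap R F r = (b : R) • x v :=
    fun v => hb v (Finset.mem_univ v)
  choose c hc using hb'
  have hbne : algebraMap R F (b : R) ≠ 0 := fun h =>
    nonZeroDivisors.coe_ne_zero b (IsFractionRing.injective R F (by simpa using h))
  set Cf : Fin nn → Polynomial R :=
    fun i => ∑ a : Fin u, Polynomial.C (c (i, a)) * Polynomial.X ^ (a : ℕ) with hCf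
  have hCdeg : ∀ i, (Cf i).natDegree ≤ k * (nn - 1) := by
    intro i
    apply Polynomial.natDegree_sum_le_of_forall_le
    intro a _
    refine le_trans (Polynomial.natDegree_mul_le) ?_
    have := a.2
    simp only [Polynomial.natDegree_C, Polynomial.natDegree_X_pow, zero_add]
    omega
  refine ⟨Cf, ?_, hCdeg, ?_⟩
  · -- not all zero
    obtain ⟨v, hv⟩ := Function.ne_iff.mp hx0
    refine ⟨v.1, fun hC => ?_⟩
    have hcv : c (v.1, v.2) = 0 := by
      have h2 := congrArg (fun g => Polynomial.coeff g (v.2 : ℕ)) hC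
      simp only [hCf] at h2
      rwa [coeff_mk u (fun a => c (v.1, a)) v.2, Polynomial.coeff_zero] at h2
    apply hv
    have h2 := hc v
    rw [show (v.1, v.2) = v from rfl] at hcv
    rw [hcv, map_zero, Algebra.smul_def] at h2
    rcases mul_eq_zero.mp h2.symm with h | h
    · exact absurd h hbne
    · exact h
  · -- the equations
    intro j hj
    apply Polynomial.ext
    intro m
    rw [Polynomial.coeff_zero, Polynomial.finset_sum_coeff]
    have step : ∀ i : Fin nn, (tmulA q (Cf i) (P i j)).coeff m
        = ∑ a ∈ Finset.range u,
            (Cf i).coeff a * (if a ≤ m then twist q a ((P i j).coeff (m - a)) else 0) :=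
      fun i => coeff_tmulA q _ _ m u (by have := hCdeg i; omega)
    rw [Finset.sum_congr rfl fun i _ => step i]
    by_cases hm : m < k * nn + 1
    · -- within the range of the linear system: use the kernel equation
      have hk := congrFun hxker (⟨⟨j, hj⟩, ⟨m, hm⟩⟩ :
        {j : Fin nn // 1 ≤ (j : ℕ)} × Fin (k * nn + 1))
      simp only [Matrix.mulVecLin_apply, Matrix.mulVec, dotProduct, Pi.zero_apply] at hk
      apply IsFractionRing.injective R F
      rw [map_zero, map_sum]
      have key : ∀ i : Fin nn,
          algebraMap R F (∑ a ∈ Finset.range u, (Cf i).coeff a *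
            (if a ≤ m then twist q a ((P i j).coeff (m - a)) else 0))
          = ∑ a : Fin u, (algebraMap R F (b : R) * x (i, a)) *
              M (⟨⟨j, hj⟩, ⟨m, hm⟩⟩) (i, a) := by
        intro i
        rw [← Fin.sum_univ_eq_sum_range (fun a => (Cf i).coeff a *
          (if a ≤ m then twist q a ((P i j).coeff (m - a)) else 0)) u, map_sum]
        apply Finset.sum_congr rfl
        intro a _
        rw [map_mul, hCf, coeff_mk, hc (i, a), Algebra.smul_def, hM]
      rw [Finset.sum_congr rfl fun i _ => key i]
      have swap : ∑ i : Fin nn, ∑ a : Fin u, (algebraMap R F (b : R) * x (i, a)) *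
            M (⟨⟨j, hj⟩, ⟨m, hm⟩⟩) (i, a)
          = algebraMap R F (b : R) *
            ∑ v : Fin nn × Fin u, M (⟨⟨j, hj⟩, ⟨m, hm⟩⟩) v * x v := by
        rw [Fintype.sum_prod_type, Finset.mul_sum]
        apply Finset.sum_congr rfl
        intro i _
        rw [Finset.mul_sum]
        apply Finset.sum_congr rfl
        intro a _
        ring
      rw [swap, hk, mul_zero]
    · -- beyond the range: everything vanishes for degree reasons
      apply Finset.sum_eq_zero
      intro i _
      apply Finset.sum_eq_zero
      intro a ha
      rw [Finset.mem_range] at ha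
      rw [if_pos (by omega), Polynomial.coeff_eq_zero_of_natDegree_lt
        (lt_of_le_of_lt (hP i j) (by omega)), twist_zero, mul_zero]
end

section
/- Let K be an algebraically closed field of characteristic p containing F_q. Suppose the sequences (x_i) and (y_i) in K satisfy first-order twisted recurrences a_1 x_{i+1}^q + a_0 x_{i+1} + b x_i = 0 and c_1 y_{i+1}^q + c_0 y_{i+1} + d y_i = 0 for all i ≥ 0, with a_1, c_1 ≠ 0. Then there exist P_2, P_1, P_0 ∈ K{τ}, not all zero, with deg_τ P_2 ≤ 3, deg_τ P_1 ≤ 2, deg_τ P_0 ≤ 1, such that for all i ≥ 0: P_2(x_{i+2}+y_{i+2}) + P_1(x_{i+1}+y_{i+1}) + P_0(x_i + y_i) = 0, where P(z) denotes the additive polynomial ∑ c_j z^{q^j} associated to P = ∑ c_j τ^j. -/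
lemma frob3 {p n q : ℕ} [Fact p.Prime] {K : Type*} [Field K] [CharP K p]
    (hq : q = p ^ n) (A B C u v w : K) (h : A * u + B * v + C * w = 0) :
    A ^ q * u ^ q + B ^ q * v ^ q + C ^ q * w ^ q = 0 := by
  have hq0 : q ≠ 0 := by
    subst hq; exact pow_ne_zero n (Nat.Prime.ne_zero Fact.out)
  have h2 := congrArg (· ^ q) h
  simp only [zero_pow hq0] at h2
  calc A ^ q * u ^ q + B ^ q * v ^ q + C ^ q * w ^ q
      = (A * u + B * v + C * w) ^ q := by
        subst hq
        rw [add_pow_char_pow, add_pow_char_pow, mul_pow, mul_pow, mul_pow]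
    _ = 0 := h2

lemma holo_key {p n q : ℕ} [Fact p.Prime] {K : Type*} [Field K] [CharP K p]
    (hq : q = p ^ n) (a0 a1 b : K) (x : ℕ → K)
    (hx : ∀ i, a1 * (x (i + 1)) ^ q + a0 * x (i + 1) + b * x i = 0)
    (u0 u1 u2 v0 v1 : K) (i : ℕ) :
    (u0 * a0) * x (i + 2) + (u0 * a1 + u1 * a0 ^ q) * x (i + 2) ^ q
      + (u1 * a1 ^ q + u2 * a0 ^ q ^ 2) * x (i + 2) ^ q ^ 2
      + (u2 * a1 ^ q ^ 2) * x (i + 2) ^ q ^ 3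
      + ((u0 * b + v0 * a0) * x (i + 1)
        + (u1 * b ^ q + v0 * a1 + v1 * a0 ^ q) * x (i + 1) ^ q
        + (u2 * b ^ q ^ 2 + v1 * a1 ^ q) * x (i + 1) ^ q ^ 2)
      + ((v0 * b) * x i + (v1 * b ^ q) * x i ^ q) = 0 := by
  have h1 := hx (i + 1)
  have h0 := hx i
  have h1q := frob3 hq _ _ _ _ _ _ h1
  have h1q2 := frob3 hq _ _ _ _ _ _ h1q
  have h0q := frob3 hq _ _ _ _ _ _ h0
  linear_combination u0 * h1 + u1 * h1q + u2 * h1q2 + v0 * h0 + v1 * h0q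

lemma exists_ker_vec {K : Type*} [Field K] (f : (Fin 10 → K) →ₗ[K] (Fin 9 → K)) :
    ∃ v : Fin 10 → K, v ≠ 0 ∧ f v = 0 := by
  by_contra hcon
  push_neg at hcon
  have hinj : Function.Injective f := by
    rw [← LinearMap.ker_eq_bot, LinearMap.ker_eq_bot']
    intro m hm
    by_contra hm0
    exact hcon m hm0 hm
  have hle := LinearMap.finrank_le_finrank_of_injective hinj
  simp [Module.finrank_fin_fun] at hle

set_option maxHeartbeats 2000000 in
/-- Closure of holonomic sequences under memberwise sum, in the simplest case:
if `(x_i)` and `(y_i)` satisfy first-order twisted recurrences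
`a₁ x_{i+1}^q + a₀ x_{i+1} + b x_i = 0` and `c₁ y_{i+1}^q + c₀ y_{i+1} + d y_i = 0`
with `a₁, c₁ ≠ 0`, then there are `P₂, P₁, P₀ ∈ K{τ}` (represented as
polynomials whose `j`-th coefficient is the coefficient of `τ^j`), not all
zero, with `deg_τ P₂ ≤ 3`, `deg_τ P₁ ≤ 2`, `deg_τ P₀ ≤ 1`, such that the
associated additive polynomials satisfy
`P₂(x_{i+2}+y_{i+2}) + P₁(x_{i+1}+y_{i+1}) + P₀(x_i+y_i) = 0` for all `i`. -/
theorem stmt17 {p n q : ℕ} [Fact p.Prime] (hn : 0 < n) (hq : q = p ^ n)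
    {K : Type*} [Field K] [CharP K p] [IsAlgClosed K]
    (a0 a1 b c0 c1 d : K) (ha1 : a1 ≠ 0) (hc1 : c1 ≠ 0)
    (x y : ℕ → K)
    (hx : ∀ i, a1 * (x (i + 1)) ^ q + a0 * x (i + 1) + b * x i = 0)
    (hy : ∀ i, c1 * (y (i + 1)) ^ q + c0 * y (i + 1) + d * y i = 0) :
    ∃ P2 P1 P0 : Polynomial K,
      ¬ (P2 = 0 ∧ P1 = 0 ∧ P0 = 0) ∧
      P2.natDegree ≤ 3 ∧ P1.natDegree ≤ 2 ∧ P0.natDegree ≤ 1 ∧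
      ∀ i,
        (∑ j ∈ Finset.range 4, P2.coeff j * (x (i + 2) + y (i + 2)) ^ q ^ j) +
        (∑ j ∈ Finset.range 3, P1.coeff j * (x (i + 1) + y (i + 1)) ^ q ^ j) +
        (∑ j ∈ Finset.range 2, P0.coeff j * (x i + y i) ^ q ^ j) = 0 := by
  obtain ⟨v, hvne, e0, e1, e2, e3, e4, e5, e6, e7, e8⟩ :
      ∃ v : Fin 10 → K, v ≠ 0 ∧
        (a0 * v 0 - c0 * v 5 = 0) ∧
        (a1 * v 0 + a0 ^ q * v 1 - c1 * v 5 - c0 ^ q * v 6 = 0) ∧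
        (a1 ^ q * v 1 + a0 ^ q ^ 2 * v 2 - c1 ^ q * v 6 - c0 ^ q ^ 2 * v 7 = 0) ∧
        (a1 ^ q ^ 2 * v 2 - c1 ^ q ^ 2 * v 7 = 0) ∧
        (b * v 0 + a0 * v 3 - d * v 5 - c0 * v 8 = 0) ∧
        (b ^ q * v 1 + a1 * v 3 + a0 ^ q * v 4 - d ^ q * v 6 - c1 * v 8 - c0 ^ q * v 9 = 0) ∧
        (b ^ q ^ 2 * v 2 + a1 ^ q * v 4 - d ^ q ^ 2 * v 7 - c1 ^ q * v 9 = 0) ∧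
        (b * v 3 - d * v 8 = 0) ∧
        (b ^ q * v 4 - d ^ q * v 9 = 0) := by
    obtain ⟨v, hvne, hfv⟩ := exists_ker_vec (K := K) (LinearMap.pi
      ![a0 • LinearMap.proj 0 - c0 • LinearMap.proj 5,
        a1 • LinearMap.proj 0 + a0 ^ q • LinearMap.proj 1 - c1 • LinearMap.proj 5
          - c0 ^ q • LinearMap.proj 6,
        a1 ^ q • LinearMap.proj 1 + a0 ^ q ^ 2 • LinearMap.proj 2 - c1 ^ q • LinearMap.proj 6
          - c0 ^ q ^ 2 • LinearMap.proj 7,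
        a1 ^ q ^ 2 • LinearMap.proj 2 - c1 ^ q ^ 2 • LinearMap.proj 7,
        b • LinearMap.proj 0 + a0 • LinearMap.proj 3 - d • LinearMap.proj 5
          - c0 • LinearMap.proj 8,
        b ^ q • LinearMap.proj 1 + a1 • LinearMap.proj 3 + a0 ^ q • LinearMap.proj 4
          - d ^ q • LinearMap.proj 6 - c1 • LinearMap.proj 8 - c0 ^ q • LinearMap.proj 9,
        b ^ q ^ 2 • LinearMap.proj 2 + a1 ^ q • LinearMap.proj 4 - d ^ q ^ 2 • LinearMap.proj 7
          - c1 ^ q • LinearMap.proj 9,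
        b • LinearMap.proj 3 - d • LinearMap.proj 8,
        b ^ q • LinearMap.proj 4 - d ^ q • LinearMap.proj 9])
    exact ⟨v, hvne, congrFun hfv 0, congrFun hfv 1, congrFun hfv 2, congrFun hfv 3,
      congrFun hfv 4, congrFun hfv 5, congrFun hfv 6, congrFun hfv 7, congrFun hfv 8⟩
  refine ⟨Polynomial.C (v 0 * a0) + Polynomial.C (v 0 * a1 + v 1 * a0 ^ q) * Polynomial.X
      + Polynomial.C (v 1 * a1 ^ q + v 2 * a0 ^ q ^ 2) * Polynomial.X ^ 2
      + Polynomial.C (v 2 * a1 ^ q ^ 2) * Polynomial.X ^ 3,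
    Polynomial.C (v 0 * b + v 3 * a0)
      + Polynomial.C (v 1 * b ^ q + v 3 * a1 + v 4 * a0 ^ q) * Polynomial.X
      + Polynomial.C (v 2 * b ^ q ^ 2 + v 4 * a1 ^ q) * Polynomial.X ^ 2,
    Polynomial.C (v 3 * b) + Polynomial.C (v 4 * b ^ q) * Polynomial.X,
    ?_, ?_, ?_, ?_, ?_⟩
  · rintro ⟨h2, h1, h0⟩
    have c3 := congrArg (fun P => Polynomial.coeff P 3) h2
    have c2 := congrArg (fun P => Polynomial.coeff P 2) h2
    have c1' := congrArg (fun P => Polynomial.coeff P 1) h2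
    have d2 := congrArg (fun P => Polynomial.coeff P 2) h1
    have d1 := congrArg (fun P => Polynomial.coeff P 1) h1
    simp only [Polynomial.coeff_add, Polynomial.coeff_C_mul, Polynomial.coeff_X_pow,
      Polynomial.coeff_C, Polynomial.coeff_X, Polynomial.coeff_zero, Nat.reduceEqDiff,
      reduceIte, mul_one, mul_zero, add_zero, zero_add] at c3 c2 c1' d2 d1
    have hv2 : v 2 = 0 := by
      have h : v 2 * a1 ^ q ^ 2 = 0 := by linear_combination c3
      exact (mul_eq_zero.mp h).resolve_right (pow_ne_zero _ ha1)
    have hv1 : v 1 = 0 := by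
      have h : v 1 * a1 ^ q = 0 := by linear_combination c2 - a0 ^ q ^ 2 * hv2
      exact (mul_eq_zero.mp h).resolve_right (pow_ne_zero _ ha1)
    have hv0 : v 0 = 0 := by
      have h : v 0 * a1 = 0 := by linear_combination c1' - a0 ^ q * hv1
      exact (mul_eq_zero.mp h).resolve_right ha1
    have hv4 : v 4 = 0 := by
      have h : v 4 * a1 ^ q = 0 := by linear_combination d2 - b ^ q ^ 2 * hv2
      exact (mul_eq_zero.mp h).resolve_right (pow_ne_zero _ ha1)
    have hv3 : v 3 = 0 := by
      have h : v 3 * a1 = 0 := by linear_combination d1 - b ^ q * hv1 - a0 ^ q * hv4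
      exact (mul_eq_zero.mp h).resolve_right ha1
    have hv7 : v 7 = 0 := by
      have h : c1 ^ q ^ 2 * v 7 = 0 := by linear_combination -e3 + a1 ^ q ^ 2 * hv2
      exact (mul_eq_zero.mp h).resolve_left (pow_ne_zero _ hc1)
    have hv6 : v 6 = 0 := by
      have h : c1 ^ q * v 6 = 0 := by
        linear_combination -e2 + a1 ^ q * hv1 + a0 ^ q ^ 2 * hv2 - c0 ^ q ^ 2 * hv7
      exact (mul_eq_zero.mp h).resolve_left (pow_ne_zero _ hc1)
    have hv5 : v 5 = 0 := by
      have h : c1 * v 5 = 0 := by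
        linear_combination -e1 + a1 * hv0 + a0 ^ q * hv1 - c0 ^ q * hv6
      exact (mul_eq_zero.mp h).resolve_left hc1
    have hv9 : v 9 = 0 := by
      have h : c1 ^ q * v 9 = 0 := by
        linear_combination -e6 + b ^ q ^ 2 * hv2 + a1 ^ q * hv4 - d ^ q ^ 2 * hv7
      exact (mul_eq_zero.mp h).resolve_left (pow_ne_zero _ hc1)
    have hv8 : v 8 = 0 := by
      have h : c1 * v 8 = 0 := by
        linear_combination -e5 + b ^ q * hv1 + a1 * hv3 + a0 ^ q * hv4
          - d ^ q * hv6 - c0 ^ q * hv9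
      exact (mul_eq_zero.mp h).resolve_left hc1
    apply hvne
    funext j
    fin_cases j <;> simp [hv0, hv1, hv2, hv3, hv4, hv5, hv6, hv7, hv8, hv9]
  · compute_degree
  · compute_degree
  · compute_degree
  · intro i
    have hsplit : ∀ (u w : K) (j : ℕ), (u + w) ^ q ^ j = u ^ q ^ j + w ^ q ^ j := by
      intro u w j
      subst hq
      rw [← pow_mul]
      exact add_pow_char_pow u w p (n * j)
    have hX := holo_key hq a0 a1 b x hx (v 0) (v 1) (v 2) (v 3) (v 4) i
    have hY := holo_key hq c0 c1 d y hy (v 5) (v 6) (v 7) (v 8) (v 9) i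
    simp only [Finset.sum_range_succ, Finset.sum_range_zero, zero_add, pow_zero, pow_one,
      Polynomial.coeff_add, Polynomial.coeff_C_mul, Polynomial.coeff_X_pow,
      Polynomial.coeff_C, Polynomial.coeff_X, Polynomial.coeff_zero, Nat.reduceEqDiff,
      reduceIte, mul_one, mul_zero, add_zero, zero_add, hsplit]
    linear_combination hX + hY + y (i + 2) * e0 + y (i + 2) ^ q * e1
      + y (i + 2) ^ q ^ 2 * e2 + y (i + 2) ^ q ^ 3 * e3
      + y (i + 1) * e4 + y (i + 1) ^ q * e5 + y (i + 1) ^ q ^ 2 * e6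
      + y i * e7 + y i ^ q * e8
end
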